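/- The integral of $\|g\|^{-4}$ over $SL(2,\mathbb{R})$ with respect to a Haar measure equals $\pi^2/2$, where $\|g\|$ is the Hilbert–Schmidt (Frobenius) norm and the Haar measure is normalized via the Iwasawa decomposition $g = n_x a k_\theta$ with $n_x = \begin{pmatrix}1 & x\\ 0 & 1\end{pmatrix}$, $a = \mathrm{diag}(\alpha, \alpha^{-1})$, $d\nu = \frac{dx \, d\alpha \, d\theta}{\alpha^3}$ so that $SO(2,\mathbb{R})$ has volume $2\pi$. Equivalently, $2\pi \int_0^\infty \int_{-\infty}^\infty \frac{1}{(\alpha^2 + \alpha^{-2} + x^2\alpha^{-2})^2} \frac{dx\, d\alpha}{\alpha^3} = \frac{\pi^2}{2}$. -/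

import Mathlib

open Real Filter MeasureTheory Set

lemma key (c : ℝ) (hc : 0 < c) :
    ∫ x : ℝ, ((c^2+x^2)^2)⁻¹ = π / (2*(c^2*c)) := by
  have hc2 : (0:ℝ) < c^2 := by positivity
  set G : ℝ → ℝ := fun x => x / (2*c^2*(c^2+x^2)) + Real.arctan (x/c) / (2*(c^2*c)) with hG
  have hd : ∀ x : ℝ, HasDerivAt G (((c^2+x^2)^2)⁻¹) x := by
    intro x
    have hden : (0:ℝ) < c^2 + x^2 := by positivity
    have h0 : HasDerivAt (fun y : ℝ => c^2 + y^2) (2*x) x := by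
      simpa using (hasDerivAt_pow 2 x).const_add (c^2)
    have h1 : HasDerivAt (fun y : ℝ => y / (2*c^2*(c^2+y^2)))
        ((1*(2*c^2*(c^2+x^2)) - x*(2*c^2*(2*x))) / (2*c^2*(c^2+x^2))^2) x := by
      exact (hasDerivAt_id x).div (h0.const_mul (2*c^2)) (by positivity)
    have h2 : HasDerivAt (fun y : ℝ => Real.arctan (y/c))
        ((1 / (1+(x/c)^2)) * (1/c)) x := by
      have := (Real.hasDerivAt_arctan (x/c)).comp x ((hasDerivAt_id x).div_const c)
      simpa [Function.comp_def] using this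
    have := h1.add (h2.div_const (2*(c^2*c)))
    convert this using 1
    · rfl
    · rfl
    · rfl
    have h1c : (1:ℝ)+(x/c)^2 ≠ 0 := by positivity
    field_simp
    ring
  have hcont : Continuous fun x : ℝ => ((c^2+x^2)^2)⁻¹ := by
    have : ∀ x : ℝ, ((c^2+x^2)^2) ≠ 0 := fun x => by positivity
    exact ((continuous_const.add (continuous_pow 2)).pow 2).inv₀ this
  have hint : Integrable fun x : ℝ => ((c^2+x^2)^2)⁻¹ := by
    set m := min (c^2) 1 with hm
    have hm0 : 0 < m := lt_min hc2 one_pos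
    apply (integrable_inv_one_add_sq.const_mul ((m*c^2)⁻¹)).mono' hcont.aestronglyMeasurable
    filter_upwards with x
    have hden : (0:ℝ) < c^2 + x^2 := by positivity
    have h1 : m ≤ c^2 := min_le_left _ _
    have h2 : m ≤ 1 := min_le_right _ _
    have hb : m*(1+x^2) ≤ c^2+x^2 := by nlinarith [sq_nonneg x]
    have hle : m*c^2*(1+x^2) ≤ (c^2+x^2)^2 := by
      nlinarith [mul_le_mul_of_nonneg_right hb hden.le,
        mul_le_mul_of_nonneg_left (le_add_of_nonneg_right (sq_nonneg x) : c^2 ≤ c^2+x^2)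
          (by positivity : (0:ℝ) ≤ m*(1+x^2))]
    rw [Real.norm_eq_abs, abs_of_nonneg (by positivity)]
    calc ((c^2+x^2)^2)⁻¹ ≤ (m*c^2*(1+x^2))⁻¹ := by
          apply inv_anti₀ (by positivity) hle
      _ = (m*c^2)⁻¹ * (1+x^2)⁻¹ := by rw [mul_inv]
  -- limit of first term at +∞
  have t1top : Tendsto (fun x : ℝ => x / (2*c^2*(c^2+x^2))) atTop (nhds 0) := by
    have h : Tendsto (fun x : ℝ => 2*c^2*(c^2/x + x)) atTop atTop := by
      apply Tendsto.const_mul_atTop (by positivity)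
      exact (tendsto_const_nhds.div_atTop tendsto_id).add_atTop tendsto_id
    apply h.inv_tendsto_atTop.congr'
    filter_upwards [eventually_gt_atTop (0:ℝ)] with x hx
    have hx' : x ≠ 0 := ne_of_gt hx
    simp only [Pi.inv_apply]
    rw [show 2*c^2*(c^2/x + x) = (2*c^2*(c^2+x^2))/x by field_simp, inv_div]
  have t1bot : Tendsto (fun x : ℝ => x / (2*c^2*(c^2+x^2))) atBot (nhds 0) := by
    have := (t1top.comp tendsto_neg_atBot_atTop).neg
    rw [neg_zero] at this
    apply this.congr
    intro x
    simp only [Function.comp]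
    rw [neg_pow, neg_div]
    ring_nf
  have t2top : Tendsto (fun x : ℝ => Real.arctan (x/c) / (2*(c^2*c))) atTop
      (nhds ((π/2) / (2*(c^2*c)))) := by
    exact ((Real.tendsto_arctan_atTop.mono_right nhdsWithin_le_nhds).comp
      (tendsto_id.atTop_div_const hc)).div_const _
  have t2bot : Tendsto (fun x : ℝ => Real.arctan (x/c) / (2*(c^2*c))) atBot
      (nhds ((-(π/2)) / (2*(c^2*c)))) := by
    exact ((Real.tendsto_arctan_atBot.mono_right nhdsWithin_le_nhds).comp
      (tendsto_id.atBot_div_const hc)).div_const _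
  have := integral_of_hasDerivAt_of_tendsto hd hint
    (by simpa using t1bot.add t2bot) (by simpa using t1top.add t2top)
  rw [this]
  field_simp
  ring



/-- The integral of `‖g‖⁻⁴` (Frobenius norm) over `SL(2,ℝ)` with respect to the Haar
measure coming from the Iwasawa decomposition `g = n_x diag(α,α⁻¹) k_θ`
(with `SO(2)` of volume `2π`) equals `π²/2`:
`2π ∫₀^∞ ∫_ℝ (α² + α⁻² + x²α⁻²)⁻² dx dα/α³ = π²/2`. -/
theorem stmt7 :
    2 * Real.pi * ∫ α in Set.Ioi (0 : ℝ),
      (∫ x : ℝ, 1 / (α ^ 2 + 1 / α ^ 2 + x ^ 2 / α ^ 2) ^ 2) / α ^ 3 =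
      Real.pi ^ 2 / 2 := by
  have houter : ∀ α ∈ Ioi (0:ℝ),
      (∫ x : ℝ, 1 / (α ^ 2 + 1 / α ^ 2 + x ^ 2 / α ^ 2) ^ 2) / α ^ 3
      = π * α / (2 * ((1+α^4) * Real.sqrt (1+α^4))) := by
    intro α hα
    rw [mem_Ioi] at hα
    have hα' : α ≠ 0 := ne_of_gt hα
    set c := Real.sqrt (1+α^4) with hcdef
    have hc : 0 < c := Real.sqrt_pos.2 (by positivity)
    have hc2 : c^2 = 1+α^4 := Real.sq_sqrt (by positivity)
    have hx : ∀ x : ℝ, 1 / (α ^ 2 + 1 / α ^ 2 + x ^ 2 / α ^ 2) ^ 2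
        = α^4 * ((c^2+x^2)^2)⁻¹ := by
      intro x
      rw [hc2]
      have h1 : (0:ℝ) < 1+α^4+x^2 := by positivity
      field_simp
      ring
    simp_rw [hx, MeasureTheory.integral_const_mul, key c hc, hc2]
    field_simp
  rw [MeasureTheory.setIntegral_congr_fun measurableSet_Ioi houter]
  set g : ℝ → ℝ := fun α => π/4 * (α^2 / Real.sqrt (1+α^4)) with hg
  have hgderiv : ∀ α ∈ Ioi (0:ℝ), HasDerivAt g (π * α / (2 * ((1+α^4) * Real.sqrt (1+α^4)))) α := by
    intro α _
    have hu0 : (0:ℝ) < 1+α^4 := by positivity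
    have hs0 : (0:ℝ) < Real.sqrt (1+α^4) := Real.sqrt_pos.2 hu0
    have hss : Real.sqrt (1+α^4)^2 = 1+α^4 := Real.sq_sqrt hu0.le
    have hu : HasDerivAt (fun α : ℝ => 1+α^4) (4*α^3) α := by
      simpa using (hasDerivAt_pow 4 α).const_add 1
    have hs : HasDerivAt (fun α : ℝ => Real.sqrt (1+α^4))
        (1/(2*Real.sqrt (1+α^4)) * (4*α^3)) α :=
      (Real.hasDerivAt_sqrt (ne_of_gt hu0)).comp α hu
    have hdiv := ((hasDerivAt_pow 2 α).div hs (ne_of_gt hs0)).const_mul (π/4)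
    convert hdiv using 1
    · rfl
    · rfl
    · rfl
    set s := Real.sqrt (1+α^4)
    field_simp
    linear_combination (-4*α^5) * hss
  have hnonneg : ∀ α ∈ Ioi (0:ℝ), 0 ≤ π * α / (2 * ((1+α^4) * Real.sqrt (1+α^4))) := by
    intro α hα
    rw [mem_Ioi] at hα
    have := Real.pi_pos
    positivity
  have hcont : ContinuousWithinAt g (Ici (0:ℝ)) 0 := by
    have h : Continuous fun α : ℝ => Real.sqrt (1+α^4) :=
      Real.continuous_sqrt.comp (by continuity)
    exact (continuous_const.mul ((continuous_pow 2).div h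
      (fun α => ne_of_gt (Real.sqrt_pos.2 (by positivity))))).continuousWithinAt
  have htop : Tendsto g atTop (nhds (π/4)) := by
    have h1 : Tendsto (fun α : ℝ => 1+α^4) atTop atTop :=
      tendsto_atTop_add_const_left _ 1 (tendsto_pow_atTop (by norm_num))
    have h2 : Tendsto (fun α : ℝ => 1 - ((1:ℝ)+α^4)⁻¹) atTop (nhds 1) := by
      simpa using h1.inv_tendsto_atTop.const_sub (1:ℝ)
    have h3 : Tendsto (fun α : ℝ => π/4 * Real.sqrt (1 - (1+α^4)⁻¹)) atTop (nhds (π/4)) := by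
      have := ((Real.continuous_sqrt.tendsto 1).comp h2).const_mul (π/4)
      simpa [Real.sqrt_one] using this
    apply h3.congr'
    filter_upwards [eventually_gt_atTop (0:ℝ)] with α hα
    have hu0 : (0:ℝ) < 1+α^4 := by positivity
    have e1 : 1 - ((1:ℝ)+α^4)⁻¹ = α^4/(1+α^4) := by field_simp; ring
    rw [e1, Real.sqrt_div (by positivity) _]
    have e2 : Real.sqrt (α^4) = α^2 := by
      rw [show (α:ℝ)^4 = (α^2)^2 by ring, Real.sqrt_sq (sq_nonneg α)]
    rw [e2]
  have := integral_Ioi_of_hasDerivAt_of_nonneg hcont hgderiv hnonneg htop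
  rw [this]
  have hg0 : g 0 = 0 := by simp [hg]
  rw [hg0]
  ring
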